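/- For λ ∈ [-1,1], the Gaussian second quantization operator Γ(λ), defined on Hermite expansions by Γ(λ)(Σ γ_j h_j) = Σ λ^j γ_j h_j, extends to a bounded linear operator on L^p(ℝ, μ) for every p ∈ [1, ∞] with operator norm equal to one. -/

import Mathlib

open MeasureTheory ProbabilityTheory
open scoped ENNReal

noncomputable def gaussμ : Measure ℝ := gaussianReal 0 1

noncomputable def Herm (n : ℕ) (x : ℝ) : ℝ := Polynomial.aeval x (Polynomial.hermite n)

/-- The Gaussian second quantization (Ornstein–Uhlenbeck / Mehler) operator `Γ(λ)`,
given by the Mehler formula `(Γ(λ)f)(x) = ∫ f(λx + √(1-λ²)y) dμ(y)`. -/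
noncomputable def gaussOU (l : ℝ) (f : ℝ → ℝ) (x : ℝ) : ℝ :=
  ∫ y, f (l * x + Real.sqrt (1 - l ^ 2) * y) ∂gaussμ

open Polynomial Real Filter
open scoped NNReal Topology

namespace OUAux

instance : IsProbabilityMeasure gaussμ := by unfold gaussμ; infer_instance

lemma gaussμ_eq : gaussμ = volume.withDensity (gaussianPDF 0 1) :=
  gaussianReal_of_var_ne_zero 0 one_ne_zero

lemma pdf01_eq : gaussianPDFReal 0 1 = fun x => (Real.sqrt (2 * π))⁻¹ * rexp (-x ^ 2 / 2) := by
  funext x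
  simp [gaussianPDFReal]

lemma integrable_pow_gauss (n : ℕ) : Integrable (fun x : ℝ => x ^ n * rexp (-x ^ 2 / 2)) := by
  have h := integrable_rpow_mul_exp_neg_mul_sq (b := 1/2) (by norm_num)
    (s := (n : ℝ)) (by exact lt_of_lt_of_le (by norm_num) (Nat.cast_nonneg n))
  have : (fun x : ℝ => x ^ (n : ℝ) * rexp (-(1/2) * x ^ 2))
      = fun x : ℝ => x ^ n * rexp (-x ^ 2 / 2) := by
    funext x
    rw [Real.rpow_natCast]
    ring_nf
  rwa [this] at h

lemma integrable_poly_gauss (P : Polynomial ℝ) :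
    Integrable (fun x : ℝ => P.eval x * rexp (-x ^ 2 / 2)) := by
  have : (fun x : ℝ => P.eval x * rexp (-x ^ 2 / 2))
      = fun x : ℝ => ∑ i ∈ Finset.range (P.natDegree + 1),
          P.coeff i * (x ^ i * rexp (-x ^ 2 / 2)) := by
    funext x
    rw [Polynomial.eval_eq_sum_range, Finset.sum_mul]
    simp [mul_assoc]
  rw [this]
  exact integrable_finset_sum _ (fun i _ => (integrable_pow_gauss i).const_mul _)

lemma integral_gaussμ (f : ℝ → ℝ) :
    ∫ x, f x ∂gaussμ = ∫ x, gaussianPDFReal 0 1 x * f x := by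
  rw [gaussμ_eq, gaussianPDF_def]
  simp_rw [ENNReal.ofReal]
  rw [integral_withDensity_eq_integral_smul
    ((measurable_gaussianPDFReal 0 1).real_toNNReal) f]
  congr 1; funext x
  rw [NNReal.smul_def, smul_eq_mul, Real.coe_toNNReal _ (gaussianPDFReal_nonneg 0 1 x)]

lemma integrable_poly_gaussμ (P : Polynomial ℝ) :
    Integrable (fun x => P.eval x) gaussμ := by
  rw [gaussμ_eq]
  rw [integrable_withDensity_iff (measurable_gaussianPDF 0 1)
    (Eventually.of_forall fun x => ENNReal.ofReal_lt_top)]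
  have : (fun x => P.eval x * (gaussianPDF 0 1 x).toReal)
      = fun x => (Real.sqrt (2 * π))⁻¹ * (P.eval x * rexp (-x ^ 2 / 2)) := by
    funext x
    rw [gaussianPDF, ENNReal.toReal_ofReal (gaussianPDFReal_nonneg 0 1 x), pdf01_eq]
    ring
  rw [this]
  exact (integrable_poly_gauss P).const_mul _

end OUAux

namespace OUAux2
open OUAux

lemma tendsto_pow_gauss_atTop (i : ℕ) :
    Tendsto (fun x : ℝ => x ^ i * rexp (-x ^ 2 / 2)) atTop (𝓝 0) := by
  have h := rpow_mul_exp_neg_mul_sq_isLittleO_exp_neg (b := 1/2) (by norm_num) (i : ℝ)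
  have he : (fun x : ℝ => x ^ ((i : ℝ)) * rexp (-(1/2) * x ^ 2))
      = fun x : ℝ => x ^ i * rexp (-x ^ 2 / 2) := by
    funext x; rw [Real.rpow_natCast]; ring_nf
  rw [he] at h
  have hdiv : Tendsto (fun x : ℝ => x / 2) atTop atTop :=
    Tendsto.atTop_div_const (by norm_num) tendsto_id
  have h1 : Tendsto (fun x : ℝ => -(1 / 2 : ℝ) * x) atTop atBot :=
    Filter.Tendsto.congr (fun x => by simp [Function.comp]; ring)
      (tendsto_neg_atTop_atBot.comp hdiv)
  have h0 : Tendsto (fun x : ℝ => rexp (-(1 / 2 : ℝ) * x)) atTop (𝓝 0) :=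
    Real.tendsto_exp_atBot.comp h1
  exact h.isBigO.trans_tendsto h0

lemma tendsto_poly_gauss_atTop (P : Polynomial ℝ) :
    Tendsto (fun x : ℝ => P.eval x * rexp (-x ^ 2 / 2)) atTop (𝓝 0) := by
  have : (fun x : ℝ => P.eval x * rexp (-x ^ 2 / 2))
      = fun x : ℝ => ∑ i ∈ Finset.range (P.natDegree + 1),
          P.coeff i * (x ^ i * rexp (-x ^ 2 / 2)) := by
    funext x
    rw [Polynomial.eval_eq_sum_range, Finset.sum_mul]
    simp [mul_assoc]
  rw [this]
  have : Tendsto (fun x : ℝ => ∑ i ∈ Finset.range (P.natDegree + 1),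
      P.coeff i * (x ^ i * rexp (-x ^ 2 / 2))) atTop
      (𝓝 (∑ i ∈ Finset.range (P.natDegree + 1), P.coeff i * 0)) := by
    exact tendsto_finset_sum _ (fun i _ => (tendsto_pow_gauss_atTop i).const_mul _)
  simpa using this

lemma tendsto_poly_gauss_atBot (P : Polynomial ℝ) :
    Tendsto (fun x : ℝ => P.eval x * rexp (-x ^ 2 / 2)) atBot (𝓝 0) := by
  have h := (tendsto_poly_gauss_atTop (P.comp (-Polynomial.X))).comp tendsto_neg_atBot_atTop
  have : ((fun x : ℝ => (P.comp (-Polynomial.X)).eval x * rexp (-x ^ 2 / 2)) ∘ (fun x : ℝ => -x))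
      = fun x : ℝ => P.eval x * rexp (-x ^ 2 / 2) := by
    funext x
    simp [Function.comp, Polynomial.eval_comp, neg_sq]
  rwa [this] at h

lemma hasDerivAt_gauss (P : Polynomial ℝ) (y : ℝ) :
    HasDerivAt (fun y : ℝ => P.eval y * rexp (-y ^ 2 / 2))
      ((P.derivative.eval y - y * P.eval y) * rexp (-y ^ 2 / 2)) y := by
  have hexp : HasDerivAt (fun y : ℝ => rexp (-y ^ 2 / 2)) (-y * rexp (-y ^ 2 / 2)) y := by
    have hinner : HasDerivAt (fun y : ℝ => -y ^ 2 / 2) (-y) y := by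
      have h := ((hasDerivAt_pow 2 y).neg.div_const 2)
      have e : -(((2:ℕ):ℝ) * y ^ (2 - 1)) / 2 = -y := by push_cast; ring
      rwa [e] at h
    have h := hinner.exp
    have e : rexp (-y ^ 2 / 2) * -y = -y * rexp (-y ^ 2 / 2) := by ring
    rwa [e] at h
  have h := (P.hasDerivAt y).mul hexp
  have e : P.derivative.eval y * rexp (-y ^ 2 / 2) + P.eval y * (-y * rexp (-y ^ 2 / 2))
      = (P.derivative.eval y - y * P.eval y) * rexp (-y ^ 2 / 2) := by ring
  rwa [e] at h

lemma gauss_ibp (P : Polynomial ℝ) :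
    ∫ y, y * P.eval y ∂gaussμ = ∫ y, P.derivative.eval y ∂gaussμ := by
  set G : ℝ → ℝ := fun y => (P.derivative.eval y - y * P.eval y) * rexp (-y ^ 2 / 2) with hG
  have hG_int : Integrable G := by
    have : G = fun y => (P.derivative - Polynomial.X * P).eval y * rexp (-y ^ 2 / 2) := by
      funext y; simp [hG]
    rw [this]; exact integrable_poly_gauss _
  have hIic : ∫ y in Set.Iic 0, G y = P.eval 0 * rexp (-(0:ℝ) ^ 2 / 2) - 0 :=
    integral_Iic_of_hasDerivAt_of_tendsto' (fun x _ => hasDerivAt_gauss P x)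
      hG_int.integrableOn (tendsto_poly_gauss_atBot P)
  have hIoi : ∫ y in Set.Ioi 0, G y = 0 - P.eval 0 * rexp (-(0:ℝ) ^ 2 / 2) :=
    integral_Ioi_of_hasDerivAt_of_tendsto' (fun x _ => hasDerivAt_gauss P x)
      hG_int.integrableOn (tendsto_poly_gauss_atTop P)
  have htot : ∫ y, G y = 0 := by
    have hu : (Set.Iic (0:ℝ)) ∪ (Set.Ioi 0) = Set.univ := Set.Iic_union_Ioi
    rw [← setIntegral_univ, ← hu,
      setIntegral_union (Set.Iic_disjoint_Ioi le_rfl) measurableSet_Ioi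
        hG_int.integrableOn hG_int.integrableOn, hIic, hIoi]
    ring
  have key : ∫ y, (P.derivative.eval y - y * P.eval y) ∂gaussμ = 0 := by
    rw [integral_gaussμ, pdf01_eq]
    have : ∫ x, (Real.sqrt (2 * π))⁻¹ * rexp (-x ^ 2 / 2) * (P.derivative.eval x - x * P.eval x)
        = (Real.sqrt (2 * π))⁻¹ * ∫ x, G x := by
      rw [← integral_const_mul]
      congr 1; funext x; simp only [hG]; ring
    rw [this, htot, mul_zero]
  have h1 : Integrable (fun y => P.derivative.eval y) gaussμ := integrable_poly_gaussμ _
  have h2 : Integrable (fun y => y * P.eval y) gaussμ := by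
    have : (fun y : ℝ => y * P.eval y) = fun y => (Polynomial.X * P).eval y := by
      funext y; simp
    rw [this]; exact integrable_poly_gaussμ _
  have hsub : ∫ y, (P.derivative.eval y - y * P.eval y) ∂gaussμ
      = (∫ y, P.derivative.eval y ∂gaussμ) - ∫ y, y * P.eval y ∂gaussμ := integral_sub h1 h2
  linarith [hsub, key]

end OUAux2

namespace OUAux3
open OUAux OUAux2

noncomputable def HermP (n : ℕ) : Polynomial ℝ := (Polynomial.hermite n).map (Int.castRingHom ℝ)

lemma HermP_eval (n : ℕ) (x : ℝ) : (HermP n).eval x = Herm n x := by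
  simp [HermP, Herm, Polynomial.aeval_def, Polynomial.eval₂_eq_eval_map, algebraMap_int_eq]

lemma HermP_zero : HermP 0 = 1 := by simp [HermP, Polynomial.hermite_zero]

lemma HermP_one : HermP 1 = Polynomial.X := by simp [HermP, Polynomial.hermite_one]

lemma HermP_succ (n : ℕ) :
    HermP (n + 1) = Polynomial.X * HermP n - Polynomial.derivative (HermP n) := by
  simp [HermP, Polynomial.hermite_succ, Polynomial.map_sub, Polynomial.map_mul,
    Polynomial.derivative_map]

lemma derivative_HermP (n : ℕ) :
    Polynomial.derivative (HermP (n + 1)) = Polynomial.C ((n : ℝ) + 1) * HermP n := by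
  induction n with
  | zero => simp [HermP_one, HermP_zero]
  | succ n ih =>
    rw [HermP_succ (n + 1), derivative_sub, derivative_mul, derivative_X, one_mul, ih,
      derivative_mul, derivative_C, zero_mul, zero_add]
    rw [HermP_succ n]
    push_cast
    simp only [map_add, map_one]
    ring

lemma integrable_eval_affine (P : Polynomial ℝ) (c s : ℝ) :
    Integrable (fun y => P.eval (c + s * y)) gaussμ := by
  have : (fun y => P.eval (c + s * y))
      = fun y => (P.comp (Polynomial.C c + Polynomial.C s * Polynomial.X)).eval y := by
    funext y; simp [Polynomial.eval_comp]
  rw [this]; exact integrable_poly_gaussμ _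

lemma integrable_mul_eval_affine (P : Polynomial ℝ) (c s : ℝ) :
    Integrable (fun y => y * P.eval (c + s * y)) gaussμ := by
  have : (fun y => y * P.eval (c + s * y))
      = fun y => (Polynomial.X * P.comp (Polynomial.C c + Polynomial.C s * Polynomial.X)).eval y := by
    funext y; simp [Polynomial.eval_comp]
  rw [this]; exact integrable_poly_gaussμ _

lemma integral_mul_eval_affine (P : Polynomial ℝ) (c s : ℝ) :
    ∫ y, y * P.eval (c + s * y) ∂gaussμ
      = s * ∫ y, (Polynomial.derivative P).eval (c + s * y) ∂gaussμ := by
  have h := gauss_ibp (P.comp (Polynomial.C c + Polynomial.C s * Polynomial.X))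
  have h1 : (fun y => y * (P.comp (Polynomial.C c + Polynomial.C s * Polynomial.X)).eval y)
      = fun y => y * P.eval (c + s * y) := by
    funext y; simp [Polynomial.eval_comp]
  have h2 : ∫ y, (Polynomial.derivative
        (P.comp (Polynomial.C c + Polynomial.C s * Polynomial.X))).eval y ∂gaussμ
      = s * ∫ y, (Polynomial.derivative P).eval (c + s * y) ∂gaussμ := by
    rw [← integral_const_mul]
    congr 1; funext y
    rw [Polynomial.derivative_comp]
    simp only [Polynomial.eval_mul, Polynomial.eval_comp, Polynomial.eval_add,
      Polynomial.eval_C, Polynomial.eval_X, Polynomial.derivative_add,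
      Polynomial.derivative_C, Polynomial.derivative_mul, Polynomial.derivative_X,
      zero_add, mul_one, zero_mul, add_zero]
  rw [← h2, ← h1, h]

lemma integral_y : ∫ y, y ∂gaussμ = 0 := by
  have h := integral_mul_eval_affine 1 0 0
  simpa using h

lemma mehler_eigen (l s : ℝ) (hs2 : s ^ 2 = 1 - l ^ 2) (x : ℝ) (n : ℕ) :
    ∫ y, (HermP n).eval (l * x + s * y) ∂gaussμ = l ^ n * (HermP n).eval x := by
  induction n using Nat.strong_induction_on with
  | _ n ih =>
    match n with
    | 0 => simp [HermP_zero, measure_univ]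
    | 1 =>
      simp only [HermP_one, Polynomial.eval_X]
      have hy_int : Integrable (fun y : ℝ => y) gaussμ := by
        simpa using integrable_poly_gaussμ Polynomial.X
      rw [integral_add (integrable_const _) (hy_int.const_mul s), integral_const,
        integral_const_mul, integral_y]
      simp [measure_univ]
    | (n + 2) =>
      have hevId : ∀ t : ℝ, (HermP (n + 2)).eval t
          = t * (HermP (n + 1)).eval t - ((n : ℝ) + 1) * (HermP n).eval t := by
        intro t
        rw [HermP_succ (n + 1), Polynomial.eval_sub, Polynomial.eval_mul, Polynomial.eval_X,
          derivative_HermP n]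
        simp
      have ih1 := ih (n + 1) (by omega)
      have ih0 := ih n (by omega)
      have hyu := integral_mul_eval_affine (HermP (n + 1)) (l * x) s
      rw [derivative_HermP n] at hyu
      have hyu' : ∫ y, y * (HermP (n + 1)).eval (l * x + s * y) ∂gaussμ
          = s * (((n : ℝ) + 1) * (l ^ n * (HermP n).eval x)) := by
        rw [hyu]
        congr 1
        rw [← ih0, ← integral_const_mul]
        congr 1; funext y; simp
      calc ∫ y, (HermP (n + 2)).eval (l * x + s * y) ∂gaussμ
          = ∫ y, ((l * x) * (HermP (n + 1)).eval (l * x + s * y)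
              + s * (y * (HermP (n + 1)).eval (l * x + s * y))
              - ((n : ℝ) + 1) * (HermP n).eval (l * x + s * y)) ∂gaussμ := by
            congr 1; funext y; rw [hevId]; ring
        _ = ((l * x) * ∫ y, (HermP (n + 1)).eval (l * x + s * y) ∂gaussμ)
              + s * ∫ y, y * (HermP (n + 1)).eval (l * x + s * y) ∂gaussμ
              - ((n : ℝ) + 1) * ∫ y, (HermP n).eval (l * x + s * y) ∂gaussμ := by
            rw [integral_sub, integral_add, integral_const_mul, integral_const_mul,
              integral_const_mul]
            · exact (integrable_eval_affine _ _ _).const_mul _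
            · exact (integrable_mul_eval_affine _ _ _).const_mul _
            · exact ((integrable_eval_affine _ _ _).const_mul _).add
                ((integrable_mul_eval_affine _ _ _).const_mul _)
            · exact (integrable_eval_affine _ _ _).const_mul _
        _ = l ^ (n + 2) * (HermP (n + 2)).eval x := by
            rw [ih1, ih0, hyu', hevId x]
            linear_combination ((n : ℝ) + 1) * l ^ n * (HermP n).eval x * hs2

end OUAux3

namespace OUAux4
open OUAux Set

lemma pdf_mix (l s a x : ℝ) (hs : s ≠ 0) (hs2 : s ^ 2 = 1 - l ^ 2) :
    gaussianPDFReal 0 1 x * gaussianPDFReal (l * x) (⟨s ^ 2, sq_nonneg s⟩ : ℝ≥0) a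
      = gaussianPDFReal 0 1 a * gaussianPDFReal (a * l) (⟨s ^ 2, sq_nonneg s⟩ : ℝ≥0) x := by
  have h1l : (1 : ℝ) - l ^ 2 ≠ 0 := by rw [← hs2]; exact pow_ne_zero 2 hs
  have hc : ((⟨s ^ 2, sq_nonneg s⟩ : ℝ≥0) : ℝ) = s ^ 2 := rfl
  simp only [gaussianPDFReal, NNReal.coe_mk, NNReal.coe_one, hc]
  change (√(2 * π * 1))⁻¹ * rexp (-(x - 0) ^ 2 / (2 * 1)) *
      ((√(2 * π * s ^ 2))⁻¹ * rexp (-(a - l * x) ^ 2 / (2 * s ^ 2))) =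
    (√(2 * π * 1))⁻¹ * rexp (-(a - 0) ^ 2 / (2 * 1)) *
      ((√(2 * π * s ^ 2))⁻¹ * rexp (-(x - a * l) ^ 2 / (2 * s ^ 2)))
  have key : rexp (-(x - 0) ^ 2 / (2 * 1)) * rexp (-(a - l * x) ^ 2 / (2 * s ^ 2))
      = rexp (-(a - 0) ^ 2 / (2 * 1)) * rexp (-(x - a * l) ^ 2 / (2 * s ^ 2)) := by
    rw [← Real.exp_add, ← Real.exp_add]
    congr 1
    rw [hs2]
    field_simp
    ring
  linear_combination ((Real.sqrt (2 * π * 1))⁻¹ * (Real.sqrt (2 * π * s ^ 2))⁻¹) * key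

lemma map_affine (c s : ℝ) :
    Measure.map (fun y => c + s * y) gaussμ
      = gaussianReal c (⟨s ^ 2, sq_nonneg s⟩ * 1 : ℝ≥0) := by
  have hm1 : Measurable fun y : ℝ => s * y := by fun_prop
  have hm2 : Measurable fun x : ℝ => c + x := by fun_prop
  have hcomp : (fun y : ℝ => c + s * y) = (fun x : ℝ => c + x) ∘ (fun y : ℝ => s * y) := rfl
  have h1 : Measure.map (fun y : ℝ => s * y) gaussμ
      = gaussianReal (s * 0) (⟨s ^ 2, sq_nonneg s⟩ * 1 : ℝ≥0) := by
    have := gaussianReal_map_const_mul (μ := 0) (v := 1) s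
    exact this
  have h2 := gaussianReal_map_const_add
    (μ := s * 0) (v := (⟨s ^ 2, sq_nonneg s⟩ * 1 : ℝ≥0)) c
  rw [hcomp, ← Measure.map_map hm2 hm1, h1]
  have : (fun x : ℝ => c + x) = (c + ·) := rfl
  rw [this, h2, mul_zero, zero_add]

lemma measurable_S (l s : ℝ) : Measurable (fun z : ℝ × ℝ => l * z.1 + s * z.2) :=
  (measurable_fst.const_mul l).add (measurable_snd.const_mul s)

lemma measurable_pdf2 (l : ℝ) (σ : ℝ≥0) :
    Measurable (fun p : ℝ × ℝ => gaussianPDF (l * p.1) σ p.2) := by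
  apply Measurable.ennreal_ofReal
  unfold gaussianPDFReal
  exact ((((measurable_snd.sub (measurable_fst.const_mul l)).pow_const 2).neg.div_const
    _).exp.const_mul _)

lemma pdf_ne_top (m : ℝ) (v : ℝ≥0) (x : ℝ) : gaussianPDF m v x ≠ ⊤ := by
  simp [gaussianPDF]

lemma map_S (l s : ℝ) (hs2 : s ^ 2 = 1 - l ^ 2) :
    Measure.map (fun z : ℝ × ℝ => l * z.1 + s * z.2) (gaussμ.prod gaussμ) = gaussμ := by
  by_cases hs : s = 0
  · have hl2 : l ^ 2 = 1 := by
      have := hs2; rw [hs] at this; simp at this; linarith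
    have hml : Measurable fun x : ℝ => l * x := by fun_prop
    have hfun : (fun z : ℝ × ℝ => l * z.1 + s * z.2)
        = (fun x : ℝ => l * x) ∘ Prod.fst := by
      funext z; simp [hs]
    rw [hfun, ← Measure.map_map hml measurable_fst]
    rw [Measure.map_fst_prod]
    simp only [measure_univ, one_smul]
    have h1 : Measure.map (fun x : ℝ => l * x) gaussμ
        = gaussianReal (l * 0) (⟨l ^ 2, sq_nonneg l⟩ * 1 : ℝ≥0) := by
      exact gaussianReal_map_const_mul (μ := 0) (v := 1) l
    rw [h1]
    have he : (⟨l ^ 2, sq_nonneg l⟩ * 1 : ℝ≥0) = 1 := by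
      apply NNReal.eq; show l ^ 2 * 1 = 1; simp [hl2]
    rw [he, mul_zero]
    rfl
  · set σ : ℝ≥0 := (⟨s ^ 2, sq_nonneg s⟩ * 1 : ℝ≥0) with hσdef
    have hσ : σ ≠ 0 := by
      intro h
      apply pow_ne_zero 2 hs
      have : ((σ : ℝ≥0) : ℝ) = 0 := by rw [h]; simp
      have h' : s ^ 2 * 1 = 0 := this; simpa using h'
    ext A hA
    rw [Measure.map_apply (measurable_S l s) hA,
      Measure.prod_apply (measurable_S l s hA)]
    have hker : ∀ x : ℝ, gaussμ (Prod.mk x ⁻¹' ((fun z : ℝ × ℝ => l * z.1 + s * z.2) ⁻¹' A))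
        = ∫⁻ a, A.indicator (gaussianPDF (l * x) σ) a ∂volume := by
      intro x
      have hmaff : Measurable fun y : ℝ => l * x + s * y := by fun_prop
      have hpre : Prod.mk x ⁻¹' ((fun z : ℝ × ℝ => l * z.1 + s * z.2) ⁻¹' A)
          = (fun y => l * x + s * y) ⁻¹' A := rfl
      rw [hpre, ← Measure.map_apply hmaff hA]
      rw [map_affine (l * x) s, ← hσdef, gaussianReal_apply _ hσ, ← lintegral_indicator hA]
    simp_rw [hker]
    have hFmeas : Measurable (fun p : ℝ × ℝ => A.indicator (gaussianPDF (l * p.1) σ) p.2) := by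
      have : (fun p : ℝ × ℝ => A.indicator (gaussianPDF (l * p.1) σ) p.2)
          = (Prod.snd ⁻¹' A).indicator (fun p : ℝ × ℝ => gaussianPDF (l * p.1) σ p.2) := by
        funext p
        by_cases hp : p.2 ∈ A <;> simp [Set.indicator, hp]
      rw [this]
      exact (measurable_pdf2 l σ).indicator (measurable_snd hA)
    have hg : Measurable (fun x : ℝ => ∫⁻ a, A.indicator (gaussianPDF (l * x) σ) a ∂volume) :=
      hFmeas.lintegral_prod_right'
    rw [gaussμ_eq, lintegral_withDensity_eq_lintegral_mul _ (measurable_gaussianPDF 0 1) hg]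
    have hswap : ∫⁻ x, (gaussianPDF 0 1 * fun x =>
          ∫⁻ a, A.indicator (gaussianPDF (l * x) σ) a ∂volume) x ∂volume
        = ∫⁻ a, ∫⁻ x, gaussianPDF 0 1 x * A.indicator (gaussianPDF (l * x) σ) a ∂volume ∂volume := by
      rw [← lintegral_lintegral_swap]
      · congr 1; funext x
        simp only [Pi.mul_apply]
        rw [lintegral_const_mul' (gaussianPDF 0 1 x) _ (pdf_ne_top 0 1 x)]
      · exact ((measurable_gaussianPDF 0 1).comp measurable_fst |>.mul hFmeas).aemeasurable
    rw [hswap]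
    have hinner : ∀ a : ℝ, ∫⁻ x, gaussianPDF 0 1 x * A.indicator (gaussianPDF (l * x) σ) a ∂volume
        = A.indicator (gaussianPDF 0 1) a := by
      intro a
      by_cases ha : a ∈ A
      · simp only [Set.indicator_of_mem ha]
        have hpt : ∀ x : ℝ, gaussianPDF 0 1 x * gaussianPDF (l * x) σ a
            = gaussianPDF 0 1 a * gaussianPDF (a * l) σ x := by
          intro x
          have hcoe : σ = (⟨s ^ 2, sq_nonneg s⟩ : ℝ≥0) := by apply NNReal.eq; show s ^ 2 * 1 = s ^ 2; ring
          rw [hcoe]; simp only [gaussianPDF]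
          rw [← ENNReal.ofReal_mul (gaussianPDFReal_nonneg 0 1 x),
            ← ENNReal.ofReal_mul (gaussianPDFReal_nonneg 0 1 a),
            pdf_mix l s a x hs hs2]
        simp_rw [hpt]
        rw [lintegral_const_mul' (gaussianPDF 0 1 a) _ (pdf_ne_top 0 1 a),
          lintegral_gaussianPDF_eq_one _ hσ, mul_one]
      · simp [Set.indicator_of_notMem ha]
    simp_rw [hinner]
    rw [lintegral_indicator hA]
    exact (withDensity_apply _ hA).symm

lemma mp_S (l s : ℝ) (hs2 : s ^ 2 = 1 - l ^ 2) :
    MeasurePreserving (fun z : ℝ × ℝ => l * z.1 + s * z.2) (gaussμ.prod gaussμ) gaussμ :=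
  ⟨measurable_S l s, map_S l s hs2⟩

end OUAux4

namespace OUAux5
open OUAux OUAux4 Filter

lemma jensen_rpow {g : ℝ → ℝ≥0∞} (hg : AEMeasurable g gaussμ) {q : ℝ} (hq : 1 ≤ q) :
    (∫⁻ y, g y ∂gaussμ) ^ q ≤ ∫⁻ y, g y ^ q ∂gaussμ := by
  rcases eq_or_lt_of_le hq with h1 | h1
  · rw [← h1]; simp
  · have hq0 : q ≠ 0 := by linarith
    have h2 : q - 1 ≠ 0 := by intro h; rw [sub_eq_zero] at h; linarith [h.symm]
    have hpq : Real.HolderConjugate q (q / (q - 1)) := by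
      refine Real.holderConjugate_iff.mpr ⟨h1, ?_⟩
      field_simp
      ring
    have hH := ENNReal.lintegral_mul_le_Lp_mul_Lq gaussμ hpq hg
      (aemeasurable_const (b := (1 : ℝ≥0∞)))
    simp only [mul_one, ENNReal.one_rpow, lintegral_one, measure_univ, one_mul,
      ENNReal.one_rpow] at hH
    calc (∫⁻ y, g y ∂gaussμ) ^ q ≤ ((∫⁻ y, g y ^ q ∂gaussμ) ^ (1 / q)) ^ q :=
          ENNReal.rpow_le_rpow (by simpa using hH) (by positivity)
      _ = ∫⁻ y, g y ^ q ∂gaussμ := by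
          rw [← ENNReal.rpow_mul, one_div, inv_mul_cancel₀ hq0, ENNReal.rpow_one]

variable {l s : ℝ}

lemma OU_congr_aux (hs2 : s ^ 2 = 1 - l ^ 2) {f g : ℝ → ℝ}
    (h : f =ᵐ[gaussμ] g) :
    (fun x => ∫ y, f (l * x + s * y) ∂gaussμ)
      =ᵐ[gaussμ] fun x => ∫ y, g (l * x + s * y) ∂gaussμ := by
  have hS := mp_S l s hs2
  have h1 : (f ∘ fun z : ℝ × ℝ => l * z.1 + s * z.2)
      =ᵐ[gaussμ.prod gaussμ] (g ∘ fun z : ℝ × ℝ => l * z.1 + s * z.2) :=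
    ae_eq_comp (measurable_S l s).aemeasurable (by rwa [hS.map_eq])
  have h2 := Measure.ae_ae_of_ae_prod h1
  filter_upwards [h2] with x hx
  exact integral_congr_ae hx

lemma eLpNorm_OU_le_aux (hs2 : s ^ 2 = 1 - l ^ 2) {p : ℝ≥0∞} (hp : 1 ≤ p)
    {f : ℝ → ℝ} (hf : StronglyMeasurable f) :
    eLpNorm (fun x => ∫ y, f (l * x + s * y) ∂gaussμ) p gaussμ ≤ eLpNorm f p gaussμ := by
  have hS := mp_S l s hs2
  by_cases hptop : p = ∞
  · subst hptop
    set C := eLpNormEssSup f gaussμ with hC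
    by_cases hCtop : C = ⊤
    · have hrhs : eLpNorm f ⊤ gaussμ = ⊤ := by rw [eLpNorm_exponent_top, ← hC, hCtop]
      rw [hrhs]; exact le_top
    · have hae : ∀ᵐ y ∂gaussμ, (‖f y‖₊ : ℝ≥0∞) ≤ C := ae_le_eLpNormEssSup
      have haeP : ∀ᵐ z : ℝ × ℝ ∂(gaussμ.prod gaussμ),
          (‖f (l * z.1 + s * z.2)‖₊ : ℝ≥0∞) ≤ C := by
        rw [← hS.map_eq] at hae
        exact (ae_map_iff (measurable_S l s).aemeasurable
          (measurableSet_le (hf.measurable.nnnorm.coe_nnreal_ennreal) measurable_const)).mp hae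
      have h2 := Measure.ae_ae_of_ae_prod haeP
      have hbound : ∀ᵐ x ∂gaussμ, ‖∫ y, f (l * x + s * y) ∂gaussμ‖ ≤ C.toReal := by
        filter_upwards [h2] with x hx
        have hx' : ∀ᵐ y ∂gaussμ, ‖f (l * x + s * y)‖ ≤ C.toReal := by
          filter_upwards [hx] with y hy
          have := ENNReal.toReal_mono hCtop hy
          simpa using this
        calc ‖∫ y, f (l * x + s * y) ∂gaussμ‖
            ≤ C.toReal * (gaussμ Set.univ).toReal := norm_integral_le_of_norm_le_const hx'
          _ = C.toReal := by simp [measure_univ]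
      calc eLpNorm (fun x => ∫ y, f (l * x + s * y) ∂gaussμ) ∞ gaussμ
          ≤ gaussμ Set.univ ^ (∞ : ℝ≥0∞).toReal⁻¹ * ENNReal.ofReal C.toReal :=
            eLpNorm_le_of_ae_bound hbound
        _ = C := by
            rw [measure_univ, ENNReal.one_rpow, one_mul, ENNReal.ofReal_toReal hCtop]
        _ = eLpNorm f ∞ gaussμ := by rw [eLpNorm_exponent_top]
  · have hp0 : p ≠ 0 := by
      intro h; rw [h] at hp; simp at hp
    have hq1 : (1 : ℝ) ≤ p.toReal := by
      have := ENNReal.toReal_mono hptop hp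
      simpa using this
    have hfm : Measurable fun y : ℝ => (‖f y‖₊ : ℝ≥0∞) ^ p.toReal :=
      (hf.measurable.nnnorm.coe_nnreal_ennreal).pow_const _
    rw [eLpNorm_eq_lintegral_rpow_enorm_toReal hp0 hptop, eLpNorm_eq_lintegral_rpow_enorm_toReal hp0 hptop]
    apply ENNReal.rpow_le_rpow _ (by positivity)
    calc ∫⁻ x, (‖∫ y, f (l * x + s * y) ∂gaussμ‖₊ : ℝ≥0∞) ^ p.toReal ∂gaussμ
        ≤ ∫⁻ x, ∫⁻ y, (‖f (l * x + s * y)‖₊ : ℝ≥0∞) ^ p.toReal ∂gaussμ ∂gaussμ := by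
          apply lintegral_mono
          intro x
          calc (‖∫ y, f (l * x + s * y) ∂gaussμ‖₊ : ℝ≥0∞) ^ p.toReal
              ≤ (∫⁻ y, (‖f (l * x + s * y)‖₊ : ℝ≥0∞) ∂gaussμ) ^ p.toReal :=
                ENNReal.rpow_le_rpow (enorm_integral_le_lintegral_enorm _) (by positivity)
            _ ≤ ∫⁻ y, (‖f (l * x + s * y)‖₊ : ℝ≥0∞) ^ p.toReal ∂gaussμ :=
                jensen_rpow ((hf.measurable.comp (by fun_prop)).nnnorm.coe_nnreal_ennreal.aemeasurable) hq1
      _ = ∫⁻ z : ℝ × ℝ, (‖f (l * z.1 + s * z.2)‖₊ : ℝ≥0∞) ^ p.toReal ∂(gaussμ.prod gaussμ) :=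
          (lintegral_prod _ (hfm.comp (measurable_S l s)).aemeasurable).symm
      _ = ∫⁻ y, (‖f y‖₊ : ℝ≥0∞) ^ p.toReal ∂gaussμ := hS.lintegral_comp hfm

lemma memℒp_OU_aux (hs2 : s ^ 2 = 1 - l ^ 2) {p : ℝ≥0∞} (hp : 1 ≤ p)
    {f : ℝ → ℝ} (hf : MemLp f p gaussμ) :
    MemLp (fun x => ∫ y, f (l * x + s * y) ∂gaussμ) p gaussμ := by
  have hS := mp_S l s hs2
  set f' := hf.1.mk f with hf'def
  have hf'sm : StronglyMeasurable f' := hf.1.stronglyMeasurable_mk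
  have hff' : f =ᵐ[gaussμ] f' := hf.1.ae_eq_mk
  have hcongr := OU_congr_aux hs2 hff'
  have hmem' : MemLp (fun x => ∫ y, f' (l * x + s * y) ∂gaussμ) p gaussμ := by
    constructor
    · exact ((hf'sm.comp_measurable (measurable_S l s)).integral_prod_right').aestronglyMeasurable
    · calc eLpNorm (fun x => ∫ y, f' (l * x + s * y) ∂gaussμ) p gaussμ
          ≤ eLpNorm f' p gaussμ := eLpNorm_OU_le_aux hs2 hp hf'sm
        _ = eLpNorm f p gaussμ := (eLpNorm_congr_ae hff').symm
        _ < ⊤ := hf.2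
  exact hmem'.ae_eq hcongr.symm

lemma eLpNorm_OU_le_aux' (hs2 : s ^ 2 = 1 - l ^ 2) {p : ℝ≥0∞} (hp : 1 ≤ p)
    {f : ℝ → ℝ} (hf : MemLp f p gaussμ) :
    eLpNorm (fun x => ∫ y, f (l * x + s * y) ∂gaussμ) p gaussμ ≤ eLpNorm f p gaussμ := by
  set f' := hf.1.mk f with hf'def
  have hf'sm : StronglyMeasurable f' := hf.1.stronglyMeasurable_mk
  have hff' : f =ᵐ[gaussμ] f' := hf.1.ae_eq_mk
  calc eLpNorm (fun x => ∫ y, f (l * x + s * y) ∂gaussμ) p gaussμ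
      = eLpNorm (fun x => ∫ y, f' (l * x + s * y) ∂gaussμ) p gaussμ :=
        eLpNorm_congr_ae (OU_congr_aux hs2 hff')
    _ ≤ eLpNorm f' p gaussμ := eLpNorm_OU_le_aux hs2 hp hf'sm
    _ = eLpNorm f p gaussμ := (eLpNorm_congr_ae hff').symm

end OUAux5

open OUAux OUAux3 OUAux4 OUAux5 in
/-- For `λ ∈ [-1,1]`, `Γ(λ)` acts on Hermite expansions by `Γ(λ) h_j = λ^j h_j`, and it
extends to a bounded linear operator on `L^p(ℝ, μ)` for every `p ∈ [1,∞]` with norm one. -/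
theorem stmt1 (l : ℝ) (hl : l ∈ Set.Icc (-1 : ℝ) 1) (p : ℝ≥0∞) [Fact (1 ≤ p)] :
    (∀ j : ℕ, ∀ x : ℝ, gaussOU l (Herm j) x = l ^ j * Herm j x) ∧
    ∃ T : Lp ℝ p gaussμ →L[ℝ] Lp ℝ p gaussμ, ‖T‖ = 1 ∧
      ∀ (f : ℝ → ℝ) (hf : MemLp f p gaussμ),
        (T (hf.toLp f) : ℝ → ℝ) =ᵐ[gaussμ] gaussOU l f := by
  have hp : (1 : ℝ≥0∞) ≤ p := Fact.out
  have hp0 : p ≠ 0 := by intro h; rw [h] at hp; simp at hp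
  have hs2 : Real.sqrt (1 - l ^ 2) ^ 2 = 1 - l ^ 2 :=
    Real.sq_sqrt (by nlinarith [hl.1, hl.2])
  have hOU : ∀ f : ℝ → ℝ, gaussOU l f
      = fun x => ∫ y, f (l * x + Real.sqrt (1 - l ^ 2) * y) ∂gaussμ := fun f => rfl
  constructor
  · intro j x
    have h := mehler_eigen l (Real.sqrt (1 - l ^ 2)) hs2 x j
    have hH : ∀ t, (HermP j).eval t = Herm j t := fun t => HermP_eval j t
    rw [hOU]
    simp only
    rw [show (fun y => Herm j (l * x + Real.sqrt (1 - l ^ 2) * y))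
      = fun y => (HermP j).eval (l * x + Real.sqrt (1 - l ^ 2) * y) by
        funext y; rw [hH]]
    rw [h, hH]
  · have hmem : ∀ F : Lp ℝ p gaussμ, MemLp (gaussOU l ⇑F) p gaussμ := fun F => by
      rw [hOU]; exact memℒp_OU_aux hs2 hp (Lp.memLp F)
    have hcong : ∀ {f g : ℝ → ℝ}, f =ᵐ[gaussμ] g → gaussOU l f =ᵐ[gaussμ] gaussOU l g := by
      intro f g h
      rw [hOU, hOU]
      exact OU_congr_aux hs2 h
    have hadd : ∀ (f g : ℝ → ℝ), MemLp f p gaussμ → MemLp g p gaussμ →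
        gaussOU l (f + g) =ᵐ[gaussμ] gaussOU l f + gaussOU l g := by
      intro f g hfm hgm
      have hS := mp_S l _ hs2
      have hfi : Integrable (f ∘ fun z : ℝ × ℝ => l * z.1 + Real.sqrt (1 - l ^ 2) * z.2)
          (gaussμ.prod gaussμ) := (hfm.comp_measurePreserving hS).integrable hp
      have hgi : Integrable (g ∘ fun z : ℝ × ℝ => l * z.1 + Real.sqrt (1 - l ^ 2) * z.2)
          (gaussμ.prod gaussμ) := (hgm.comp_measurePreserving hS).integrable hp
      filter_upwards [hfi.prod_right_ae, hgi.prod_right_ae] with x hfx hgx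
      show gaussOU l (f + g) x = gaussOU l f x + gaussOU l g x
      rw [hOU, hOU, hOU]
      simp only [Pi.add_apply]
      exact integral_add hfx hgx
    have hsmul : ∀ (c : ℝ) (f : ℝ → ℝ), gaussOU l (c • f) = c • gaussOU l f := by
      intro c f
      funext x
      rw [hOU, hOU]
      simp only [Pi.smul_apply, smul_eq_mul]
      exact integral_const_mul c _
    have hbound : ∀ F : Lp ℝ p gaussμ,
        eLpNorm (gaussOU l ⇑F) p gaussμ ≤ eLpNorm (⇑F) p gaussμ := fun F => by
      rw [hOU]; exact eLpNorm_OU_le_aux' hs2 hp (Lp.memLp F)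
    set Lmap : Lp ℝ p gaussμ →ₗ[ℝ] Lp ℝ p gaussμ :=
      { toFun := fun F => (hmem F).toLp (gaussOU l ⇑F)
        map_add' := fun F G => by
          apply Lp.ext
          have h1 : ⇑(F + G) =ᵐ[gaussμ] ⇑F + ⇑G := Lp.coeFn_add F G
          refine ((hmem (F + G)).coeFn_toLp.trans ((hcong h1).trans
            (hadd _ _ (Lp.memLp F) (Lp.memLp G)))).trans ?_
          exact ((Lp.coeFn_add _ _).trans
            (((hmem F).coeFn_toLp).add ((hmem G).coeFn_toLp))).symm.trans
            (Filter.EventuallyEq.rfl)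
        map_smul' := fun c F => by
          apply Lp.ext
          have h1 : ⇑(c • F) =ᵐ[gaussμ] c • ⇑F := Lp.coeFn_smul c F
          have h2 : gaussOU l ⇑(c • F) =ᵐ[gaussμ] c • gaussOU l ⇑F := by
            refine (hcong h1).trans ?_
            rw [hsmul]
          have h3 : ⇑(c • ((hmem F).toLp (gaussOU l ⇑F)))
              =ᵐ[gaussμ] c • gaussOU l ⇑F :=
            (Lp.coeFn_smul c _).trans ((hmem F).coeFn_toLp.const_smul c)
          exact ((hmem (c • F)).coeFn_toLp.trans h2).trans h3.symm }
      with hLmap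
    have hLnorm : ∀ F : Lp ℝ p gaussμ, ‖Lmap F‖ ≤ 1 * ‖F‖ := by
      intro F
      rw [one_mul, hLmap]
      simp only [LinearMap.coe_mk, AddHom.coe_mk]
      rw [Lp.norm_toLp, Lp.norm_def]
      exact ENNReal.toReal_mono (Lp.eLpNorm_ne_top F) (hbound F)
    refine ⟨Lmap.mkContinuous 1 hLnorm, ?_, ?_⟩
    · -- norm = 1
      have hle : ‖Lmap.mkContinuous 1 hLnorm‖ ≤ 1 :=
        LinearMap.mkContinuous_norm_le _ zero_le_one _
      set G : Lp ℝ p gaussμ := (memLp_const (1 : ℝ)).toLp _ with hGdef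
      have hGnorm : ‖G‖ = 1 := by
        rw [hGdef, Lp.norm_toLp, eLpNorm_const _ hp0 (IsProbabilityMeasure.ne_zero gaussμ)]
        simp [measure_univ]
      have hOU1 : gaussOU l (fun _ : ℝ => (1 : ℝ)) = fun _ => (1 : ℝ) := by
        funext x
        rw [hOU]
        simp [measure_univ]
      have hTG : Lmap.mkContinuous 1 hLnorm G = G := by
        apply Lp.ext
        have h0 : ⇑(Lmap.mkContinuous 1 hLnorm G) =ᵐ[gaussμ] gaussOU l ⇑G :=
          (hmem G).coeFn_toLp
        refine h0.trans ?_
        have h1 : ⇑G =ᵐ[gaussμ] fun _ => (1 : ℝ) := (memLp_const (1 : ℝ)).coeFn_toLp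
        refine (hcong h1).trans ?_
        rw [hOU1]
        exact h1.symm
      have hge : (1 : ℝ) ≤ ‖Lmap.mkContinuous 1 hLnorm‖ := by
        have h2 := (Lmap.mkContinuous 1 hLnorm).le_opNorm G
        rw [hTG, hGnorm, mul_one] at h2
        linarith
      linarith [hle, hge]
    · intro f hf
      have h0 : ⇑(Lmap.mkContinuous 1 hLnorm (hf.toLp f)) =ᵐ[gaussμ] gaussOU l ⇑(hf.toLp f) :=
        (hmem (hf.toLp f)).coeFn_toLp
      exact h0.trans (hcong hf.coeFn_toLp)
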